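/- In the Lie algebra of type G2 with highest root α̃, the multiplicity of the zero weight in the adjoint representation computed via Kostant's weight multiplicity formula equals 2, the rank of G2: m(α̃, 0) = Σ_{σ ∈ W} (-1)^{ℓ(σ)} ℘(σ(α̃+ρ) − ρ) = 2. -/

import Mathlib

namespace G2

/-- Weights for `G₂` written in coordinates with respect to the simple roots:
`(a, b)` stands for `a • α₁ + b • α₂`. -/
abbrev V := ℚ × ℚ

/-- The short simple root `α₁`. -/
def α1 : V := (1, 0)

/-- The long simple root `α₂`. -/
def α2 : V := (0, 1)

/-- The pairing `⟨v, α₁∨⟩` of a weight with the coroot of `α₁`. -/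
def pair1 (v : V) : ℚ := 2 * v.1 - 3 * v.2

/-- The pairing `⟨v, α₂∨⟩` of a weight with the coroot of `α₂`. -/
def pair2 (v : V) : ℚ := -v.1 + 2 * v.2

/-- The simple reflection corresponding to `α₁`, as a function. -/
def s1fun (v : V) : V := v - pair1 v • α1

/-- The simple reflection corresponding to `α₂`, as a function. -/
def s2fun (v : V) : V := v - pair2 v • α2

lemma s1fun_involutive : Function.Involutive s1fun := by
  intro v
  unfold s1fun pair1 α1
  apply Prod.ext <;> (simp; try ring)

lemma s2fun_involutive : Function.Involutive s2fun := by
  intro v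
  unfold s2fun pair2 α2
  apply Prod.ext <;> (simp; try ring)

/-- The simple reflection `s₁`. -/
def s1 : Equiv.Perm V := s1fun_involutive.toPerm

/-- The simple reflection `s₂`. -/
def s2 : Equiv.Perm V := s2fun_involutive.toPerm

/-- The Weyl group of `G₂`, generated by the simple reflections. -/
def W : Subgroup (Equiv.Perm V) := Subgroup.closure {s1, s2}

/-- The set of roots of `G₂`: the orbit of the simple roots under the Weyl group. -/
def Roots : Set V := {v | ∃ w ∈ W, v = w α1 ∨ v = w α2}

/-- The positive roots: roots that are nonnegative combinations of the simple roots. -/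
def PosRoots : Set V := {v ∈ Roots | 0 ≤ v.1 ∧ 0 ≤ v.2}

/-- The six positive roots of `G₂`, listed explicitly. -/
def posRoot : Fin 6 → V := ![(1,0),(0,1),(1,1),(2,1),(3,1),(3,2)]

/-- Kostant's partition function: the number of ways to write `ξ` as a nonnegative
integral combination of the positive roots of `G₂`. -/
noncomputable def kostant (ξ : V) : ℕ :=
  Set.ncard {f : Fin 6 → ℕ | ∑ i, (f i : ℚ) • posRoot i = ξ}

/-- The coefficient of `q^k` in the `q`-analog `℘_q(ξ)`: the number of ways to write `ξ`
as a nonnegative integral combination of the positive roots of `G₂` using exactly `k`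
roots counted with multiplicity. -/
noncomputable def kostantCount (k : ℕ) (ξ : V) : ℕ :=
  Set.ncard {f : Fin 6 → ℕ |
    (∑ i, (f i : ℚ) • posRoot i = ξ) ∧ ∑ i, f i = k}

/-- The length of a Weyl group element: the number of positive roots sent to
negative roots. -/
noncomputable def len (σ : Equiv.Perm V) : ℕ :=
  Set.ncard {v ∈ PosRoots | ¬ (0 ≤ (σ v).1 ∧ 0 ≤ (σ v).2)}

/-- The half-sum of the positive roots of `G₂`: `ρ = 5α₁ + 3α₂`. -/
def ρ : V := (5, 3)

/-- The highest root of `G₂`: `α̃ = 3α₁ + 2α₂`. -/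
def htilde : V := (3, 2)


/-! ### Auxiliary lemmas -/

lemma s1_apply (v : V) : s1 v = (-v.1 + 3*v.2, v.2) := by
  show s1fun v = _
  unfold s1fun pair1 α1
  apply Prod.ext <;> (simp; try ring)

lemma s2_apply (v : V) : s2 v = (v.1, v.1 - v.2) := by
  show s2fun v = _
  unfold s2fun pair2 α2
  apply Prod.ext <;> (simp; try ring)

lemma s1_sq : s1 * s1 = 1 := by
  ext v <;> simp [Equiv.Perm.mul_apply, s1_apply] <;> try ring

lemma s2_sq : s2 * s2 = 1 := by
  ext v <;> simp [Equiv.Perm.mul_apply, s2_apply] <;> try ring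

lemma braidG2 : s1*s2*s1*s2*s1*s2 = s2*s1*s2*s1*s2*s1 := by
  ext v <;> simp [Equiv.Perm.mul_apply, s1_apply, s2_apply] <;> ring

/-- The twelve elements of the Weyl group of `G₂`. -/
def wlist : Fin 12 → Equiv.Perm V :=
  ![1, s1, s2, s1*s2, s2*s1, s1*s2*s1, s2*s1*s2, s1*s2*s1*s2, s2*s1*s2*s1,
    s1*s2*s1*s2*s1, s2*s1*s2*s1*s2, s1*s2*s1*s2*s1*s2]

lemma w0 : wlist 0 = 1 := rfl
lemma w1 : wlist 1 = s1 := rfl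
lemma w2 : wlist 2 = s2 := rfl

lemma s1_cancel (x : Equiv.Perm V) : s1 * (s1 * x) = x := by
  rw [← mul_assoc, s1_sq, one_mul]

lemma s2_cancel (x : Equiv.Perm V) : s2 * (s2 * x) = x := by
  rw [← mul_assoc, s2_sq, one_mul]

lemma mul_s1_mem (i : Fin 12) : ∃ j, wlist j = s1 * wlist i := by
  fin_cases i
  · exact ⟨1, (mul_one s1).symm⟩
  · exact ⟨0, s1_sq.symm⟩
  · exact ⟨3, rfl⟩
  · exact ⟨2, (s1_cancel s2).symm⟩
  · exact ⟨5, rfl⟩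
  · exact ⟨4, (s1_cancel (s2*s1)).symm⟩
  · exact ⟨7, rfl⟩
  · exact ⟨6, (s1_cancel (s2*s1*s2)).symm⟩
  · exact ⟨9, rfl⟩
  · exact ⟨8, (s1_cancel (s2*s1*s2*s1)).symm⟩
  · exact ⟨11, rfl⟩
  · exact ⟨10, (s1_cancel (s2*s1*s2*s1*s2)).symm⟩

lemma mul_s2_mem (i : Fin 12) : ∃ j, wlist j = s2 * wlist i := by
  fin_cases i
  · exact ⟨2, (mul_one s2).symm⟩
  · exact ⟨4, rfl⟩
  · exact ⟨0, s2_sq.symm⟩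
  · exact ⟨6, rfl⟩
  · exact ⟨1, (s2_cancel s1).symm⟩
  · exact ⟨8, rfl⟩
  · exact ⟨3, (s2_cancel (s1*s2)).symm⟩
  · exact ⟨10, rfl⟩
  · exact ⟨5, (s2_cancel (s1*s2*s1)).symm⟩
  · exact ⟨11, braidG2⟩
  · exact ⟨7, (s2_cancel (s1*s2*s1*s2)).symm⟩
  · exact ⟨9, ((congrArg (fun x => s2 * x) braidG2).trans
      (s2_cancel (s1*(s2*(s1*(s2*s1)))))).symm⟩

lemma s1_mem_W : s1 ∈ W := Subgroup.subset_closure (by simp)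
lemma s2_mem_W : s2 ∈ W := Subgroup.subset_closure (by simp)

lemma wlist_mem_W (i : Fin 12) : wlist i ∈ W := by
  have h1 := s1_mem_W
  have h2 := s2_mem_W
  fin_cases i
  · exact one_mem _
  · exact h1
  · exact h2
  · exact mul_mem h1 h2
  · exact mul_mem h2 h1
  · exact mul_mem (mul_mem h1 h2) h1
  · exact mul_mem (mul_mem h2 h1) h2
  · exact mul_mem (mul_mem (mul_mem h1 h2) h1) h2
  · exact mul_mem (mul_mem (mul_mem h2 h1) h2) h1
  · exact mul_mem (mul_mem (mul_mem (mul_mem h1 h2) h1) h2) h1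
  · exact mul_mem (mul_mem (mul_mem (mul_mem h2 h1) h2) h1) h2
  · exact mul_mem (mul_mem (mul_mem (mul_mem (mul_mem h1 h2) h1) h2) h1) h2

lemma list_prod_mem_range :
    ∀ l : List (Equiv.Perm V), (∀ y ∈ l, y ∈ ({s1, s2} : Set (Equiv.Perm V))) →
      ∃ i, wlist i = l.prod := by
  intro l
  induction l with
  | nil => exact fun _ => ⟨0, by simp [w0]⟩
  | cons g t ih =>
    intro h
    obtain ⟨i, hi⟩ := ih (fun y hy => h y (List.mem_cons_of_mem _ hy))
    have hg := h g List.mem_cons_self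
    simp only [Set.mem_insert_iff, Set.mem_singleton_iff] at hg
    rw [List.prod_cons, ← hi]
    rcases hg with rfl | rfl
    · exact mul_s1_mem i
    · exact mul_s2_mem i

lemma W_eq_range : (W : Set (Equiv.Perm V)) = Set.range wlist := by
  apply Set.Subset.antisymm
  · intro x hx
    have i1 : s1⁻¹ = s1 := inv_eq_of_mul_eq_one_left s1_sq
    have i2 : s2⁻¹ = s2 := inv_eq_of_mul_eq_one_left s2_sq
    have hS : ({s1, s2} : Set (Equiv.Perm V))⁻¹ = {s1, s2} := by
      rw [Set.inv_insert, Set.inv_singleton, i1, i2]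
    have hx' : x ∈ Submonoid.closure ({s1, s2} : Set (Equiv.Perm V)) := by
      have hh : x ∈ (Subgroup.closure ({s1, s2} : Set (Equiv.Perm V))).toSubmonoid := hx
      rw [Subgroup.closure_toSubmonoid, hS, Set.union_self] at hh
      exact hh
    obtain ⟨l, hl, rfl⟩ := Submonoid.exists_list_of_mem_closure hx'
    exact list_prod_mem_range l hl
  · rintro x ⟨i, rfl⟩
    exact wlist_mem_W i

/-- The images of `α̃ + ρ = (8,5)` under the twelve Weyl group elements. -/
def vals : Fin 12 → V :=
  ![(8,5),(7,5),(8,3),(1,3),(7,2),(-1,2),(1,-2),(-7,-2),(-1,-3),(-8,-3),(-7,-5),(-8,-5)]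

lemma hv0 : wlist 0 (htilde + ρ) = ((8:ℚ), (5:ℚ)) := by
  simp only [w0, Equiv.Perm.one_apply, htilde, ρ, Prod.mk_add_mk]; norm_num
lemma hv1 : wlist 1 (htilde + ρ) = ((7:ℚ), (5:ℚ)) := by
  simp only [w1, htilde, ρ, Prod.mk_add_mk, s1_apply]; norm_num
lemma hv2 : wlist 2 (htilde + ρ) = ((8:ℚ), (3:ℚ)) := by
  simp only [w2, htilde, ρ, Prod.mk_add_mk, s2_apply]; norm_num
lemma hv3 : wlist 3 (htilde + ρ) = ((1:ℚ), (3:ℚ)) := by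
  show (s1*s2) _ = _
  simp only [htilde, ρ, Prod.mk_add_mk, Equiv.Perm.mul_apply, s1_apply, s2_apply]; norm_num
lemma hv4 : wlist 4 (htilde + ρ) = ((7:ℚ), (2:ℚ)) := by
  show (s2*s1) _ = _
  simp only [htilde, ρ, Prod.mk_add_mk, Equiv.Perm.mul_apply, s1_apply, s2_apply]; norm_num
lemma hv5 : wlist 5 (htilde + ρ) = ((-1:ℚ), (2:ℚ)) := by
  show (s1*s2*s1) _ = _
  simp only [htilde, ρ, Prod.mk_add_mk, Equiv.Perm.mul_apply, s1_apply, s2_apply]; norm_num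
lemma hv6 : wlist 6 (htilde + ρ) = ((1:ℚ), (-2:ℚ)) := by
  show (s2*s1*s2) _ = _
  simp only [htilde, ρ, Prod.mk_add_mk, Equiv.Perm.mul_apply, s1_apply, s2_apply]; norm_num
lemma hv7 : wlist 7 (htilde + ρ) = ((-7:ℚ), (-2:ℚ)) := by
  show (s1*s2*s1*s2) _ = _
  simp only [htilde, ρ, Prod.mk_add_mk, Equiv.Perm.mul_apply, s1_apply, s2_apply]; norm_num
lemma hv8 : wlist 8 (htilde + ρ) = ((-1:ℚ), (-3:ℚ)) := by
  show (s2*s1*s2*s1) _ = _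
  simp only [htilde, ρ, Prod.mk_add_mk, Equiv.Perm.mul_apply, s1_apply, s2_apply]; norm_num
lemma hv9 : wlist 9 (htilde + ρ) = ((-8:ℚ), (-3:ℚ)) := by
  show (s1*s2*s1*s2*s1) _ = _
  simp only [htilde, ρ, Prod.mk_add_mk, Equiv.Perm.mul_apply, s1_apply, s2_apply]; norm_num
lemma hv10 : wlist 10 (htilde + ρ) = ((-7:ℚ), (-5:ℚ)) := by
  show (s2*s1*s2*s1*s2) _ = _
  simp only [htilde, ρ, Prod.mk_add_mk, Equiv.Perm.mul_apply, s1_apply, s2_apply]; norm_num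
lemma hv11 : wlist 11 (htilde + ρ) = ((-8:ℚ), (-5:ℚ)) := by
  show (s1*s2*s1*s2*s1*s2) _ = _
  simp only [htilde, ρ, Prod.mk_add_mk, Equiv.Perm.mul_apply, s1_apply, s2_apply]; norm_num

lemma wlist_apply_v (i : Fin 12) : wlist i (htilde + ρ) = vals i := by
  fin_cases i
  · exact hv0
  · exact hv1
  · exact hv2
  · exact hv3
  · exact hv4
  · exact hv5
  · exact hv6
  · exact hv7
  · exact hv8
  · exact hv9
  · exact hv10
  · exact hv11

lemma vals_inj : Function.Injective vals := by decide

lemma wlist_inj : Function.Injective wlist := by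
  intro i j h
  apply vals_inj
  rw [← wlist_apply_v, ← wlist_apply_v, h]


/-- Images of `α₁` under the twelve Weyl group elements. -/
def ra : Fin 12 → V :=
  ![(1,0),(-1,0),(1,1),(2,1),(-1,-1),(-2,-1),(2,1),(1,1),(-2,-1),(-1,-1),(1,0),(-1,0)]

/-- Images of `α₂` under the twelve Weyl group elements. -/
def rb : Fin 12 → V :=
  ![(0,1),(3,1),(0,-1),(-3,-1),(3,2),(3,2),(-3,-2),(-3,-2),(3,1),(0,1),(-3,-1),(0,-1)]

lemma wlist_apply_a (i : Fin 12) : wlist i α1 = ra i := by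
  fin_cases i
  · show (1 : Equiv.Perm V) α1 = ((1:ℚ), (0:ℚ))
    simp [α1]
  · show s1 α1 = ((-1:ℚ), (0:ℚ))
    rw [s1_apply]; norm_num [α1, Prod.ext_iff]
  · show s2 α1 = ((1:ℚ), (1:ℚ))
    rw [s2_apply]; norm_num [α1, Prod.ext_iff]
  · show (s1*s2) α1 = ((2:ℚ), (1:ℚ))
    simp only [Equiv.Perm.mul_apply, s1_apply, s2_apply]; norm_num [α1, Prod.ext_iff]
  · show (s2*s1) α1 = ((-1:ℚ), (-1:ℚ))
    simp only [Equiv.Perm.mul_apply, s1_apply, s2_apply]; norm_num [α1, Prod.ext_iff]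
  · show (s1*s2*s1) α1 = ((-2:ℚ), (-1:ℚ))
    simp only [Equiv.Perm.mul_apply, s1_apply, s2_apply]; norm_num [α1, Prod.ext_iff]
  · show (s2*s1*s2) α1 = ((2:ℚ), (1:ℚ))
    simp only [Equiv.Perm.mul_apply, s1_apply, s2_apply]; norm_num [α1, Prod.ext_iff]
  · show (s1*s2*s1*s2) α1 = ((1:ℚ), (1:ℚ))
    simp only [Equiv.Perm.mul_apply, s1_apply, s2_apply]; norm_num [α1, Prod.ext_iff]
  · show (s2*s1*s2*s1) α1 = ((-2:ℚ), (-1:ℚ))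
    simp only [Equiv.Perm.mul_apply, s1_apply, s2_apply]; norm_num [α1, Prod.ext_iff]
  · show (s1*s2*s1*s2*s1) α1 = ((-1:ℚ), (-1:ℚ))
    simp only [Equiv.Perm.mul_apply, s1_apply, s2_apply]; norm_num [α1, Prod.ext_iff]
  · show (s2*s1*s2*s1*s2) α1 = ((1:ℚ), (0:ℚ))
    simp only [Equiv.Perm.mul_apply, s1_apply, s2_apply]; norm_num [α1, Prod.ext_iff]
  · show (s1*s2*s1*s2*s1*s2) α1 = ((-1:ℚ), (0:ℚ))
    simp only [Equiv.Perm.mul_apply, s1_apply, s2_apply]; norm_num [α1, Prod.ext_iff]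

lemma wlist_apply_b (i : Fin 12) : wlist i α2 = rb i := by
  fin_cases i
  · show (1 : Equiv.Perm V) α2 = ((0:ℚ), (1:ℚ))
    simp [α2]
  · show s1 α2 = ((3:ℚ), (1:ℚ))
    rw [s1_apply]; norm_num [α2, Prod.ext_iff]
  · show s2 α2 = ((0:ℚ), (-1:ℚ))
    rw [s2_apply]; norm_num [α2, Prod.ext_iff]
  · show (s1*s2) α2 = ((-3:ℚ), (-1:ℚ))
    simp only [Equiv.Perm.mul_apply, s1_apply, s2_apply]; norm_num [α2, Prod.ext_iff]
  · show (s2*s1) α2 = ((3:ℚ), (2:ℚ))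
    simp only [Equiv.Perm.mul_apply, s1_apply, s2_apply]; norm_num [α2, Prod.ext_iff]
  · show (s1*s2*s1) α2 = ((3:ℚ), (2:ℚ))
    simp only [Equiv.Perm.mul_apply, s1_apply, s2_apply]; norm_num [α2, Prod.ext_iff]
  · show (s2*s1*s2) α2 = ((-3:ℚ), (-2:ℚ))
    simp only [Equiv.Perm.mul_apply, s1_apply, s2_apply]; norm_num [α2, Prod.ext_iff]
  · show (s1*s2*s1*s2) α2 = ((-3:ℚ), (-2:ℚ))
    simp only [Equiv.Perm.mul_apply, s1_apply, s2_apply]; norm_num [α2, Prod.ext_iff]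
  · show (s2*s1*s2*s1) α2 = ((3:ℚ), (1:ℚ))
    simp only [Equiv.Perm.mul_apply, s1_apply, s2_apply]; norm_num [α2, Prod.ext_iff]
  · show (s1*s2*s1*s2*s1) α2 = ((0:ℚ), (1:ℚ))
    simp only [Equiv.Perm.mul_apply, s1_apply, s2_apply]; norm_num [α2, Prod.ext_iff]
  · show (s2*s1*s2*s1*s2) α2 = ((-3:ℚ), (-1:ℚ))
    simp only [Equiv.Perm.mul_apply, s1_apply, s2_apply]; norm_num [α2, Prod.ext_iff]
  · show (s1*s2*s1*s2*s1*s2) α2 = ((0:ℚ), (-1:ℚ))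
    simp only [Equiv.Perm.mul_apply, s1_apply, s2_apply]; norm_num [α2, Prod.ext_iff]

lemma posRoots_subset :
    PosRoots ⊆ {((1:ℚ),(0:ℚ)), (0,1), (1,1), (2,1), (3,1), (3,2)} := by
  rintro v ⟨⟨w, hw, hv⟩, h1, h2⟩
  have hw' : w ∈ Set.range wlist := by rw [← W_eq_range]; exact hw
  obtain ⟨i, rfl⟩ := hw'
  simp only [Set.mem_insert_iff, Set.mem_singleton_iff]
  rcases hv with rfl | rfl
  · rw [wlist_apply_a] at h1 h2 ⊢
    clear hw
    revert h1 h2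
    revert i
    decide
  · rw [wlist_apply_b] at h1 h2 ⊢
    clear hw
    revert h1 h2
    revert i
    decide


lemma len_one : len (1 : Equiv.Perm V) = 0 := by
  unfold len
  have h : {v ∈ PosRoots | ¬ (0 ≤ ((1 : Equiv.Perm V) v).1 ∧ 0 ≤ ((1 : Equiv.Perm V) v).2)}
      = (∅ : Set V) := by
    ext v
    simp only [Set.mem_setOf_eq, Set.mem_empty_iff_false, iff_false, Equiv.Perm.one_apply]
    rintro ⟨⟨_, hs⟩, hneg⟩
    exact hneg hs
  rw [h, Set.ncard_empty]

lemma flip_s1 : {v ∈ PosRoots | ¬ (0 ≤ (s1 v).1 ∧ 0 ≤ (s1 v).2)} = {((1:ℚ),(0:ℚ))} := by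
  ext v
  simp only [Set.mem_setOf_eq, Set.mem_singleton_iff]
  constructor
  · rintro ⟨hp, hneg⟩
    have h6 := posRoots_subset hp
    simp only [Set.mem_insert_iff, Set.mem_singleton_iff] at h6
    rcases h6 with rfl | rfl | rfl | rfl | rfl | rfl
    · rfl
    all_goals (exfalso; apply hneg; rw [s1_apply]; norm_num)
  · rintro rfl
    refine ⟨⟨⟨1, one_mem _, Or.inl rfl⟩, by norm_num⟩, ?_⟩
    rw [s1_apply]; norm_num

lemma flip_s2 : {v ∈ PosRoots | ¬ (0 ≤ (s2 v).1 ∧ 0 ≤ (s2 v).2)} = {((0:ℚ),(1:ℚ))} := by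
  ext v
  simp only [Set.mem_setOf_eq, Set.mem_singleton_iff]
  constructor
  · rintro ⟨hp, hneg⟩
    have h6 := posRoots_subset hp
    simp only [Set.mem_insert_iff, Set.mem_singleton_iff] at h6
    rcases h6 with rfl | rfl | rfl | rfl | rfl | rfl
    · exfalso; apply hneg; rw [s2_apply]; norm_num
    · rfl
    all_goals (exfalso; apply hneg; rw [s2_apply]; norm_num)
  · rintro rfl
    refine ⟨⟨⟨1, one_mem _, Or.inr rfl⟩, by norm_num⟩, ?_⟩
    rw [s2_apply]; norm_num

lemma len_s1 : len s1 = 1 := by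
  unfold len
  rw [flip_s1, Set.ncard_singleton]

lemma len_s2 : len s2 = 1 := by
  unfold len
  rw [flip_s2, Set.ncard_singleton]

lemma pr0 : posRoot 0 = ((1:ℚ),(0:ℚ)) := rfl
lemma pr1 : posRoot 1 = ((0:ℚ),(1:ℚ)) := rfl
lemma pr2 : posRoot 2 = ((1:ℚ),(1:ℚ)) := rfl
lemma pr3 : posRoot 3 = ((2:ℚ),(1:ℚ)) := rfl
lemma pr4 : posRoot 4 = ((3:ℚ),(1:ℚ)) := rfl
lemma pr5 : posRoot 5 = ((3:ℚ),(2:ℚ)) := rfl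

lemma sum_expand (f : Fin 6 → ℕ) :
    ∑ i, (f i : ℚ) • posRoot i =
      (((f 0 + f 2 + 2*f 3 + 3*f 4 + 3*f 5 : ℕ) : ℚ),
        ((f 1 + f 2 + f 3 + f 4 + 2*f 5 : ℕ) : ℚ)) := by
  simp only [Fin.sum_univ_six, pr0, pr1, pr2, pr3, pr4, pr5, Prod.smul_mk, smul_eq_mul,
    Prod.mk_add_mk]
  apply Prod.ext <;> (simp; push_cast; ring)

/-- Bounds for the coefficients in a partition of `(x, y)`. -/
def bnd (x y : ℕ) : Fin 6 → ℕ := ![x+1, y+1, y+1, x/2+1, x/3+1, y/2+1]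

lemma kostant_eq (x y : ℕ) :
    kostant ((x:ℚ), (y:ℚ)) =
      ((Fintype.piFinset fun i => Finset.range (bnd x y i)).filter
        (fun f => f 0 + f 2 + 2*f 3 + 3*f 4 + 3*f 5 = x ∧
          f 1 + f 2 + f 3 + f 4 + 2*f 5 = y)).card := by
  unfold kostant
  rw [← Set.ncard_coe_finset]
  congr 1
  ext f
  constructor
  · intro hf
    rw [Set.mem_setOf_eq, sum_expand, Prod.mk.injEq] at hf
    obtain ⟨h1, h2⟩ := hf
    have hA : f 0 + f 2 + 2*f 3 + 3*f 4 + 3*f 5 = x := by exact_mod_cast h1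
    have hB : f 1 + f 2 + f 3 + f 4 + 2*f 5 = y := by exact_mod_cast h2
    refine Finset.mem_coe.mpr (Finset.mem_filter.mpr ⟨Fintype.mem_piFinset.mpr ?_, hA, hB⟩)
    intro i
    fin_cases i
    · show f 0 ∈ Finset.range (x + 1)
      rw [Finset.mem_range]; omega
    · show f 1 ∈ Finset.range (y + 1)
      rw [Finset.mem_range]; omega
    · show f 2 ∈ Finset.range (y + 1)
      rw [Finset.mem_range]; omega
    · show f 3 ∈ Finset.range (x / 2 + 1)
      rw [Finset.mem_range]; omega
    · show f 4 ∈ Finset.range (x / 3 + 1)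
      rw [Finset.mem_range]; omega
    · show f 5 ∈ Finset.range (y / 2 + 1)
      rw [Finset.mem_range]; omega
  · intro hf
    obtain ⟨-, hA, hB⟩ := Finset.mem_filter.mp (Finset.mem_coe.mp hf)
    rw [Set.mem_setOf_eq, sum_expand, hA, hB]

lemma k32 : kostant ((3:ℚ), (2:ℚ)) = 7 := by
  have h : ((3:ℚ), (2:ℚ)) = (((3:ℕ):ℚ), ((2:ℕ):ℚ)) := by norm_num
  rw [h, kostant_eq]
  decide

lemma k22 : kostant ((2:ℚ), (2:ℚ)) = 4 := by
  have h : ((2:ℚ), (2:ℚ)) = (((2:ℕ):ℚ), ((2:ℕ):ℚ)) := by norm_num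
  rw [h, kostant_eq]
  decide

lemma k30 : kostant ((3:ℚ), (0:ℚ)) = 1 := by
  have h : ((3:ℚ), (0:ℚ)) = (((3:ℕ):ℚ), ((0:ℕ):ℚ)) := by norm_num
  rw [h, kostant_eq]
  decide

lemma kostant_eq_zero {ξ : V} (h : ξ.1 < 0 ∨ ξ.2 < 0) : kostant ξ = 0 := by
  have hempty : {f : Fin 6 → ℕ | ∑ i, (f i : ℚ) • posRoot i = ξ} = ∅ := by
    ext f
    simp only [Set.mem_setOf_eq, Set.mem_empty_iff_false, iff_false]
    intro hf
    rw [sum_expand] at hf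
    obtain ⟨h1, h2⟩ := Prod.ext_iff.mp hf
    rcases h with h | h
    · rw [← h1] at h
      exact not_lt.mpr (Nat.cast_nonneg _) h
    · rw [← h2] at h
      exact not_lt.mpr (Nat.cast_nonneg _) h
  unfold kostant
  rw [hempty, Set.ncard_empty]


/-- Signed contributions of the twelve Weyl group elements to Kostant's formula. -/
def cval : Fin 12 → ℤ := ![7, -4, -1, 0, 0, 0, 0, 0, 0, 0, 0, 0]

lemma t0 : ((-1 : ℤ) ^ len (wlist 0) * (kostant (wlist 0 (htilde + ρ) - ρ) : ℤ)) = 7 := by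
  have h : wlist 0 (htilde + ρ) - ρ = ((3:ℚ), (2:ℚ)) := by
    rw [hv0]; norm_num [ρ, Prod.ext_iff]
  rw [h, k32, w0, len_one]
  norm_num

lemma t1 : ((-1 : ℤ) ^ len (wlist 1) * (kostant (wlist 1 (htilde + ρ) - ρ) : ℤ)) = -4 := by
  have h : wlist 1 (htilde + ρ) - ρ = ((2:ℚ), (2:ℚ)) := by
    rw [hv1]; norm_num [ρ, Prod.ext_iff]
  rw [h, k22, w1, len_s1]
  norm_num

lemma t2 : ((-1 : ℤ) ^ len (wlist 2) * (kostant (wlist 2 (htilde + ρ) - ρ) : ℤ)) = -1 := by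
  have h : wlist 2 (htilde + ρ) - ρ = ((3:ℚ), (0:ℚ)) := by
    rw [hv2]; norm_num [ρ, Prod.ext_iff]
  rw [h, k30, w2, len_s2]
  norm_num

lemma t3 : ((-1 : ℤ) ^ len (wlist 3) * (kostant (wlist 3 (htilde + ρ) - ρ) : ℤ)) = 0 := by
  have h : wlist 3 (htilde + ρ) - ρ = ((-4:ℚ), (0:ℚ)) := by
    rw [hv3]; norm_num [ρ, Prod.ext_iff]
  rw [h, kostant_eq_zero (Or.inl (by norm_num))]
  norm_num

lemma t4 : ((-1 : ℤ) ^ len (wlist 4) * (kostant (wlist 4 (htilde + ρ) - ρ) : ℤ)) = 0 := by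
  have h : wlist 4 (htilde + ρ) - ρ = ((2:ℚ), (-1:ℚ)) := by
    rw [hv4]; norm_num [ρ, Prod.ext_iff]
  rw [h, kostant_eq_zero (Or.inr (by norm_num))]
  norm_num

lemma t5 : ((-1 : ℤ) ^ len (wlist 5) * (kostant (wlist 5 (htilde + ρ) - ρ) : ℤ)) = 0 := by
  have h : wlist 5 (htilde + ρ) - ρ = ((-6:ℚ), (-1:ℚ)) := by
    rw [hv5]; norm_num [ρ, Prod.ext_iff]
  rw [h, kostant_eq_zero (Or.inl (by norm_num))]
  norm_num

lemma t6 : ((-1 : ℤ) ^ len (wlist 6) * (kostant (wlist 6 (htilde + ρ) - ρ) : ℤ)) = 0 := by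
  have h : wlist 6 (htilde + ρ) - ρ = ((-4:ℚ), (-5:ℚ)) := by
    rw [hv6]; norm_num [ρ, Prod.ext_iff]
  rw [h, kostant_eq_zero (Or.inl (by norm_num))]
  norm_num

lemma t7 : ((-1 : ℤ) ^ len (wlist 7) * (kostant (wlist 7 (htilde + ρ) - ρ) : ℤ)) = 0 := by
  have h : wlist 7 (htilde + ρ) - ρ = ((-12:ℚ), (-5:ℚ)) := by
    rw [hv7]; norm_num [ρ, Prod.ext_iff]
  rw [h, kostant_eq_zero (Or.inl (by norm_num))]
  norm_num

lemma t8 : ((-1 : ℤ) ^ len (wlist 8) * (kostant (wlist 8 (htilde + ρ) - ρ) : ℤ)) = 0 := by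
  have h : wlist 8 (htilde + ρ) - ρ = ((-6:ℚ), (-6:ℚ)) := by
    rw [hv8]; norm_num [ρ, Prod.ext_iff]
  rw [h, kostant_eq_zero (Or.inl (by norm_num))]
  norm_num

lemma t9 : ((-1 : ℤ) ^ len (wlist 9) * (kostant (wlist 9 (htilde + ρ) - ρ) : ℤ)) = 0 := by
  have h : wlist 9 (htilde + ρ) - ρ = ((-13:ℚ), (-6:ℚ)) := by
    rw [hv9]; norm_num [ρ, Prod.ext_iff]
  rw [h, kostant_eq_zero (Or.inl (by norm_num))]
  norm_num

lemma t10 : ((-1 : ℤ) ^ len (wlist 10) * (kostant (wlist 10 (htilde + ρ) - ρ) : ℤ)) = 0 := by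
  have h : wlist 10 (htilde + ρ) - ρ = ((-12:ℚ), (-8:ℚ)) := by
    rw [hv10]; norm_num [ρ, Prod.ext_iff]
  rw [h, kostant_eq_zero (Or.inl (by norm_num))]
  norm_num

lemma t11 : ((-1 : ℤ) ^ len (wlist 11) * (kostant (wlist 11 (htilde + ρ) - ρ) : ℤ)) = 0 := by
  have h : wlist 11 (htilde + ρ) - ρ = ((-13:ℚ), (-8:ℚ)) := by
    rw [hv11]; norm_num [ρ, Prod.ext_iff]
  rw [h, kostant_eq_zero (Or.inl (by norm_num))]
  norm_num

lemma keyG2 (i : Fin 12) :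
    ((-1 : ℤ) ^ len (wlist i) * (kostant (wlist i (htilde + ρ) - ρ) : ℤ)) = cval i := by
  fin_cases i
  · exact t0
  · exact t1
  · exact t2
  · exact t3
  · exact t4
  · exact t5
  · exact t6
  · exact t7
  · exact t8
  · exact t9
  · exact t10
  · exact t11

end G2

open G2 in
/-- In the Lie algebra of type G2 with highest root α̃, the multiplicity of the zero
weight in the adjoint representation, via Kostant's weight multiplicity formula, is
m(α̃, 0) = Σ_{σ ∈ W} (-1)^{ℓ(σ)} ℘(σ(α̃+ρ) − ρ) = 2, the rank of G2. -/
theorem g2_m_adjoint_zero_weight :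
    (∑ᶠ σ ∈ (W : Set (Equiv.Perm V)),
      ((-1 : ℤ) ^ len σ * (kostant (σ (htilde + ρ) - ρ) : ℤ))) = 2 := by
  rw [W_eq_range, finsum_mem_range wlist_inj, finsum_eq_sum_of_fintype,
    Finset.sum_congr rfl (fun i _ => keyG2 i)]
  decide
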